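/- Let v_1, ..., v_m ∈ Z^2 be primitive vectors forming a complete smooth fan (counterclockwise, det(v_i, v_{i+1}) = 1 for all i mod m), with m ≥ 3. Fix an index j and insert the vector w = v_j + v_{j+1} between v_j and v_{j+1} to get a new sequence of m+1 vectors. Then the new sequence is again a complete smooth fan, and the quantity 3m + Σ_i D_i^2 (where D_i^2 is the integer with v_{i-1} + v_{i+1} + D_i^2 v_i = 0) is unchanged by this operation. -/

import Mathlib

open Finset

def det2 (a b : ℤ × ℤ) : ℤ := a.1 * b.2 - a.2 * b.1
def IsPrimitive (a : ℤ × ℤ) : Prop := Int.gcd a.1 a.2 = 1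

lemma per_shift {α : Type*} (f : ℤ → α) (T : ℤ) (h : ∀ i, f (i + T) = f i) :
    ∀ (k i : ℤ), f (i + k * T) = f i := by
  intro k
  induction k using Int.induction_on with
  | zero => simp
  | succ n ih =>
    intro i
    have h1 : i + ((n : ℤ) + 1) * T = (i + n * T) + T := by ring
    rw [h1, h, ih]
  | pred n ih =>
    intro i
    have h1 : i + (-(n : ℤ) - 1) * T + T = i + (-(n : ℤ)) * T := by ring
    have := h (i + (-(n : ℤ) - 1) * T)
    rw [h1] at this
    rw [← this, ih]

lemma per_red {α : Type*} (f : ℤ → α) (T : ℤ) (h : ∀ i, f (i + T) = f i)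
    (i s : ℤ) (hs : T ∣ (i - s)) : f i = f s := by
  obtain ⟨k, hk⟩ := hs
  have : i = s + k * T := by linarith [hk]
  rw [this, per_shift f T h]

lemma Dval (v : ℤ → ℤ × ℤ) (D : ℤ → ℤ) (hdet : ∀ i, det2 (v i) (v (i + 1)) = 1)
    (hD : ∀ i, v (i - 1) + v (i + 1) + D i • v i = 0) (i : ℤ) :
    D i = - det2 (v (i - 1)) (v (i + 1)) := by
  have h1 := congrArg Prod.fst (hD i)
  have h2 := congrArg Prod.snd (hD i)
  have h3 := hdet (i - 1)
  rw [show i - 1 + 1 = i by ring] at h3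
  simp only [Prod.fst_add, Prod.snd_add, Prod.smul_fst, Prod.smul_snd, smul_eq_mul,
    Prod.fst_zero, Prod.snd_zero, det2] at h1 h2 h3 ⊢
  linear_combination (v (i - 1)).1 * h2 - (v (i - 1)).2 * h1 - D i * h3
/-- Toric blow-up invariance: inserting `w = v j + v (j+1)` between `v j` and `v (j+1)`
in a complete smooth fan gives again a complete smooth fan, and `3m + ∑ D i²`
is unchanged.  Fans are encoded as periodic sequences `ℤ → ℤ × ℤ`. -/
theorem stmt3 (m : ℕ) (hm : 3 ≤ m) (v : ℤ → ℤ × ℤ) (j : ℤ)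
    (hj0 : 0 ≤ j) (hjm : j < m)
    (hper : ∀ i, v (i + m) = v i)
    (hprim : ∀ i, IsPrimitive (v i))
    (hdet : ∀ i, det2 (v i) (v (i + 1)) = 1)
    (v' : ℤ → ℤ × ℤ)
    (hper' : ∀ i, v' (i + (m + 1)) = v' i)
    (hlow : ∀ i, 0 ≤ i → i ≤ j → v' i = v i)
    (hnew : v' (j + 1) = v j + v (j + 1))
    (hhigh : ∀ i, j + 1 < i → i ≤ m → v' i = v (i - 1)) :
    ((∀ i, IsPrimitive (v' i)) ∧ (∀ i, det2 (v' i) (v' (i + 1)) = 1)) ∧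
    ∀ D D' : ℤ → ℤ,
      (∀ i, v (i - 1) + v (i + 1) + D i • v i = 0) →
      (∀ i, v' (i - 1) + v' (i + 1) + D' i • v' i = 0) →
      3 * (m : ℤ) + ∑ i ∈ Finset.range m, D (i : ℤ)
        = 3 * ((m : ℤ) + 1) + ∑ i ∈ Finset.range (m + 1), D' (i : ℤ) := by
  have hm3 : (3 : ℤ) ≤ (m : ℤ) := by exact_mod_cast hm
  have hvm : v (m : ℤ) = v 0 := by have := hper 0; rwa [zero_add] at this
  have key0 : v' 0 = v 0 := hlow 0 le_rfl hj0
  have keytop : v' ((m : ℤ) + 1) = v 0 := by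
    have := hper' 0; rw [zero_add] at this; rw [this, key0]
  -- general value of v' on (j+1, m+1]
  have hval : ∀ r : ℤ, j + 1 < r → r ≤ (m : ℤ) + 1 → v' r = v (r - 1) := by
    intro r h1 h2
    rcases eq_or_lt_of_le h2 with h2 | h2
    · rw [h2, keytop, show (m : ℤ) + 1 - 1 = (m : ℤ) by ring, hvm]
    · exact hhigh r h1 (by omega)
  have hvm' : v' (-1) = v' (m : ℤ) := by
    have := hper' (-1); rw [show (-1 : ℤ) + ((m : ℤ) + 1) = (m : ℤ) by ring] at this
    exact this.symm
  have hprimw : IsPrimitive (v j + v (j + 1)) := by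
    have h := hdet j
    unfold IsPrimitive
    rw [← Int.isCoprime_iff_gcd_eq_one]
    refine ⟨-(v j).2, (v j).1, ?_⟩
    simp only [det2] at h
    simp only [Prod.fst_add, Prod.snd_add]
    ring_nf
    ring_nf at h
    linarith
  -- reduction mod m+1
  have hred : ∀ i : ℤ, ∃ r : ℤ, 0 ≤ r ∧ r ≤ (m : ℤ) ∧ v' i = v' r ∧ v' (i + 1) = v' (r + 1) := by
    intro i
    refine ⟨i % ((m : ℤ) + 1), Int.emod_nonneg i (by omega), ?_, ?_, ?_⟩
    · have := Int.emod_lt_of_pos i (show (0 : ℤ) < (m : ℤ) + 1 by omega); omega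
    · exact per_red v' ((m : ℤ) + 1) hper' i _ (Int.dvd_self_sub_of_emod_eq rfl)
    · refine per_red v' ((m : ℤ) + 1) hper' (i + 1) _ ?_
      have h2 : ((m : ℤ) + 1) ∣ (i - i % ((m : ℤ) + 1)) := Int.dvd_self_sub_of_emod_eq rfl
      have h3 : i + 1 - (i % ((m : ℤ) + 1) + 1) = i - i % ((m : ℤ) + 1) := by ring
      rw [h3]; exact h2
  have hprim' : ∀ i, IsPrimitive (v' i) := by
    intro i
    obtain ⟨r, hr0, hrm, hvr, -⟩ := hred i
    rw [hvr]
    rcases le_or_gt r j with h | h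
    · rw [hlow r hr0 h]; exact hprim r
    · rcases eq_or_lt_of_le (by omega : j + 1 ≤ r) with h2 | h2
      · rw [← h2, hnew]; exact hprimw
      · rw [hhigh r h2 hrm]; exact hprim _
  have hdet' : ∀ i, det2 (v' i) (v' (i + 1)) = 1 := by
    intro i
    obtain ⟨r, hr0, hrm, hvr, hvr1⟩ := hred i
    rw [hvr, hvr1]
    rcases lt_or_ge r j with h | h
    · rw [hlow r hr0 (by omega), hlow (r + 1) (by omega) (by omega)]; exact hdet r
    rcases eq_or_lt_of_le h with h | h
    · subst h
      rw [hlow j hj0 le_rfl, hnew]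
      have := hdet j
      simp only [det2, Prod.fst_add, Prod.snd_add] at this ⊢
      linarith
    rcases eq_or_lt_of_le (by omega : j + 1 ≤ r) with h2 | h2
    · rw [← h2, hnew, show j + 1 + 1 = j + 2 by ring, hval (j + 2) (by omega) (by omega),
        show j + 2 - 1 = j + 1 by ring]
      have := hdet j
      simp only [det2, Prod.fst_add, Prod.snd_add] at this ⊢
      linarith
    · rw [hval r h2 (by omega), hval (r + 1) (by omega) (by omega),
        show r + 1 - 1 = r by ring]
      have := hdet (r - 1)
      rwa [show r - 1 + 1 = r by ring] at this
  refine ⟨⟨hprim', hdet'⟩, ?_⟩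
  intro D D' hD hD'
  have hE : ∀ i, D i = - det2 (v (i - 1)) (v (i + 1)) := Dval v D hdet hD
  have hE' : ∀ i, D' i = - det2 (v' (i - 1)) (v' (i + 1)) := Dval v' D' hdet' hD'
  have hwrap : v ((m : ℤ) - 1) = v (-1) := by
    have := hper (-1); rwa [show (-1 : ℤ) + (m : ℤ) = (m : ℤ) - 1 by ring] at this
  have vprev : v' (j - 1) = v (j - 1) := by
    rcases lt_or_ge 0 j with h | h
    · exact hlow (j - 1) (by omega) (by omega)
    · have hj : j = 0 := le_antisymm h hj0
      subst hj
      rw [show (0 : ℤ) - 1 = -1 by ring, hvm', hhigh (m : ℤ) (by omega) le_rfl, hwrap]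
  have hD'j : D' j = D j - 1 := by
    have h1 := hE' j
    rw [vprev, hnew] at h1
    have h2 := hE j
    have h3 := hdet (j - 1)
    rw [show j - 1 + 1 = j by ring] at h3
    simp only [det2, Prod.fst_add, Prod.snd_add] at h1 h2 h3
    linarith
  have hD'j1 : D' (j + 1) = -1 := by
    have h1 := hE' (j + 1)
    rw [show j + 1 - 1 = j by ring, hlow j hj0 le_rfl,
      hval (j + 1 + 1) (by omega) (by omega), show j + 1 + 1 - 1 = j + 1 by ring] at h1
    have h3 := hdet j
    simp only [det2] at h1 h3
    linarith
  have hD'j2 : j + 2 ≤ (m : ℤ) → D' (j + 2) = D (j + 1) - 1 := by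
    intro hle
    have h1 := hE' (j + 2)
    rw [show j + 2 - 1 = j + 1 by ring, hnew,
      hval (j + 2 + 1) (by omega) (by omega), show j + 2 + 1 - 1 = j + 2 by ring] at h1
    have h2 := hE (j + 1)
    rw [show j + 1 - 1 = j by ring, show j + 1 + 1 = j + 2 by ring] at h2
    have h3 := hdet (j + 1)
    rw [show j + 1 + 1 = j + 2 by ring] at h3
    simp only [det2, Prod.fst_add, Prod.snd_add] at h1 h2 h3
    linarith
  have hD'low : ∀ i : ℤ, 1 ≤ i → i ≤ j - 1 → D' i = D i := by
    intro i h1 h2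
    rw [hE' i, hE i, hlow (i - 1) (by omega) (by omega), hlow (i + 1) (by omega) (by omega)]
  have hD'high : ∀ i : ℤ, j + 3 ≤ i → i ≤ (m : ℤ) → D' i = D (i - 1) := by
    intro i h1 h2
    rw [hE' i, hval (i - 1) (by omega) (by omega), hval (i + 1) (by omega) (by omega),
      show i - 1 - 1 = i - 2 by ring, show i + 1 - 1 = i by ring]
    have h4 := hE (i - 1)
    rw [show i - 1 - 1 = i - 2 by ring, show i - 1 + 1 = i by ring] at h4
    exact h4.symm
  have hD'0mid : 1 ≤ j → j + 2 ≤ (m : ℤ) → D' 0 = D 0 := by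
    intro h1 h2
    rw [hE' 0, hE 0, show (0 : ℤ) - 1 = -1 by ring, show (0 : ℤ) + 1 = 1 by ring,
      hvm', hhigh (m : ℤ) (by omega) le_rfl, hwrap, hlow 1 (by omega) (by omega)]
  have hD'0top : j = (m : ℤ) - 1 → D' 0 = D 0 - 1 := by
    intro hjt
    have h1 := hE' 0
    rw [show (0 : ℤ) - 1 = -1 by ring, show (0 : ℤ) + 1 = 1 by ring, hvm'] at h1
    have hvm2 : v' (m : ℤ) = v j + v (j + 1) := by
      rw [show (m : ℤ) = j + 1 by omega]; exact hnew
    rw [hvm2, hlow 1 (by omega) (by omega)] at h1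
    have h2 := hE 0
    rw [show (0 : ℤ) - 1 = -1 by ring, show (0 : ℤ) + 1 = 1 by ring] at h2
    have h3 := hdet 0
    rw [show (0 : ℤ) + 1 = 1 by ring] at h3
    have h4 : v (j + 1) = v 0 := by rw [show j + 1 = (m : ℤ) by omega, hvm]
    have h5 : v j = v (-1) := by rw [show j = (m : ℤ) - 1 by omega, hwrap]
    rw [h4, h5] at h1
    simp only [det2, Prod.fst_add, Prod.snd_add] at h1 h2 h3
    linarith
  obtain ⟨jn, hjn⟩ : ∃ n : ℕ, (n : ℤ) = j := ⟨j.toNat, Int.toNat_of_nonneg hj0⟩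
  have hjnm : jn < m := by omega
  by_cases hcase : jn + 2 ≤ m
  · -- j ≤ m - 2
    have hsplit : ∀ f : ℕ → ℤ, ∑ i ∈ Finset.range (m + 1), f i
        = ∑ i ∈ Finset.range jn, f i + f jn + f (jn + 1) + f (jn + 2)
          + ∑ i ∈ Finset.Ico (jn + 3) (m + 1), f i := by
      intro f
      rw [Finset.range_eq_Ico,
        ← Finset.sum_Ico_consecutive f (Nat.zero_le jn) (by omega : jn ≤ m + 1),
        Finset.sum_eq_sum_Ico_succ_bot (by omega : jn < m + 1),
        Finset.sum_eq_sum_Ico_succ_bot (by omega : jn + 1 < m + 1),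
        Finset.sum_eq_sum_Ico_succ_bot (by omega : jn + 1 + 1 < m + 1),
        ← Finset.range_eq_Ico, show jn + 1 + 1 = jn + 2 from rfl,
        show jn + 2 + 1 = jn + 3 from rfl]
      ring
    have hsplitD : ∀ f : ℕ → ℤ, ∑ i ∈ Finset.range m, f i
        = ∑ i ∈ Finset.range jn, f i + f jn + f (jn + 1)
          + ∑ i ∈ Finset.Ico (jn + 2) m, f i := by
      intro f
      rw [Finset.range_eq_Ico,
        ← Finset.sum_Ico_consecutive f (Nat.zero_le jn) (by omega : jn ≤ m),
        Finset.sum_eq_sum_Ico_succ_bot (by omega : jn < m),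
        Finset.sum_eq_sum_Ico_succ_bot (by omega : jn + 1 < m),
        ← Finset.range_eq_Ico, show jn + 1 + 1 = jn + 2 from rfl]
      ring
    have sumlow : ∑ i ∈ Finset.range jn, D' (i : ℤ) = ∑ i ∈ Finset.range jn, D (i : ℤ) := by
      apply Finset.sum_congr rfl
      intro i hi
      simp only [Finset.mem_range] at hi
      rcases Nat.eq_zero_or_pos i with h | h
      · subst h
        simpa using hD'0mid (by omega) (by omega)
      · apply hD'low <;> [omega; omega]
    have sumhigh : ∑ i ∈ Finset.Ico (jn + 3) (m + 1), D' (i : ℤ)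
        = ∑ i ∈ Finset.Ico (jn + 2) m, D (i : ℤ) := by
      rw [Finset.sum_Ico_eq_sum_range, Finset.sum_Ico_eq_sum_range,
        show m + 1 - (jn + 3) = m - (jn + 2) by omega]
      apply Finset.sum_congr rfl
      intro i hi
      simp only [Finset.mem_range] at hi
      have h1 : D' ((jn + 3 + i : ℕ) : ℤ) = D (((jn + 3 + i : ℕ) : ℤ) - 1) := by
        apply hD'high <;> push_cast <;> omega
      rw [h1]
      congr 1
      push_cast; ring
    have c0 : ((jn : ℕ) : ℤ) = j := hjn
    have c1 : ((jn + 1 : ℕ) : ℤ) = j + 1 := by push_cast; omega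
    have c2 : ((jn + 2 : ℕ) : ℤ) = j + 2 := by push_cast; omega
    rw [hsplit (fun i => D' (i : ℤ)), hsplitD (fun i => D (i : ℤ))]
    rw [sumlow, sumhigh, c0, c1, c2, hD'j, hD'j1, hD'j2 (by omega)]
    ring
  · -- j = m - 1
    have hjt : j = (m : ℤ) - 1 := by omega
    have s1 : ∀ f : ℕ → ℤ, ∑ i ∈ Finset.range (m + 1), f i
        = f 0 + ∑ i ∈ Finset.Ico 1 (m - 1), f i + f (m - 1) + f m := by
      intro f
      rw [show m + 1 = (m - 1) + 1 + 1 by omega, Finset.sum_range_succ, Finset.sum_range_succ,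
        Finset.range_eq_Ico, Finset.sum_eq_sum_Ico_succ_bot (by omega : 0 < m - 1),
        show 0 + 1 = 1 from rfl, show m - 1 + 1 = m by omega]
    have s2 : ∀ f : ℕ → ℤ, ∑ i ∈ Finset.range m, f i
        = f 0 + ∑ i ∈ Finset.Ico 1 (m - 1), f i + f (m - 1) := by
      intro f
      conv_lhs => rw [show m = (m - 1) + 1 by omega]
      rw [Finset.sum_range_succ, Finset.range_eq_Ico,
        Finset.sum_eq_sum_Ico_succ_bot (by omega : 0 < m - 1), show 0 + 1 = 1 from rfl]
    have summid : ∑ i ∈ Finset.Ico 1 (m - 1), D' (i : ℤ) = ∑ i ∈ Finset.Ico 1 (m - 1), D (i : ℤ) := by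
      apply Finset.sum_congr rfl
      intro i hi
      simp only [Finset.mem_Ico] at hi
      apply hD'low <;> [exact_mod_cast Nat.one_le_cast.mpr hi.1; omega]
    have c0 : ((m - 1 : ℕ) : ℤ) = j := by omega
    have c1 : ((m : ℕ) : ℤ) = j + 1 := by omega
    rw [s1 (fun i => D' (i : ℤ)), s2 (fun i => D (i : ℤ))]
    rw [summid, c0, c1, hD'j, hD'j1, Nat.cast_zero, hD'0top hjt]
    ring
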